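/- Let R be a reverse homogeneous step bisimulation between stable configuration structures C and D. If R(X, Y), then R(min(X), min(Y)), where min(X) is the set of minimal events of X with respect to <_X. -/

import Mathlib

universe u v

/-- A configuration structure over event type `E` and label alphabet `L`:
a family of finite sets of events (configurations) with a labelling. -/
structure CS (E : Type u) (L : Type v) where
  C : Set (Set E)
  finite : ∀ X ∈ C, X.Finite
  label : E → L

namespace CS

variable {E E₁ E₂ : Type u} {L : Type v}

/-- Stability: rooted, connected, closed under bounded unions and intersections. -/
def IsStable (𝒞 : CS E L) : Prop :=
  ∅ ∈ 𝒞.C ∧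
  (∀ X ∈ 𝒞.C, X ≠ ∅ → ∃ e ∈ X, X \ {e} ∈ 𝒞.C) ∧
  (∀ X ∈ 𝒞.C, ∀ Y ∈ 𝒞.C, ∀ Z ∈ 𝒞.C, X ∪ Y ⊆ Z → X ∪ Y ∈ 𝒞.C) ∧
  (∀ X ∈ 𝒞.C, ∀ Y ∈ 𝒞.C, ∀ Z ∈ 𝒞.C, X ∪ Y ⊆ Z → X ∩ Y ∈ 𝒞.C)

/-- Causality: `d ≤_X e` iff every sub-configuration of `X` containing `e` contains `d`. -/
def le (𝒞 : CS E L) (X : Set E) (d e : E) : Prop :=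
  ∀ Y ∈ 𝒞.C, Y ⊆ X → e ∈ Y → d ∈ Y

/-- Strict causality `d <_X e`. -/
def lt (𝒞 : CS E L) (X : Set E) (d e : E) : Prop :=
  le 𝒞 X d e ∧ d ≠ e

/-- Concurrency within a configuration. -/
def co (𝒞 : CS E L) (X : Set E) (d e : E) : Prop :=
  ¬ lt 𝒞 X d e ∧ ¬ lt 𝒞 X e d

/-- The set of minimal events of a configuration. -/
def minE (𝒞 : CS E L) (X : Set E) : Set E :=
  {e | e ∈ X ∧ ∀ d ∈ X, ¬ lt 𝒞 X d e}

/-- Depth of an event in a configuration: the length of the longest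
causal chain (w.r.t. `<_X`) in `X` up to and including `e`. -/
noncomputable def depth (𝒞 : CS E L) (X : Set E) (e : E) : ℕ :=
  sSup {n | ∃ l : List E, l.length = n ∧ l.Chain' (lt 𝒞 X) ∧
    (∀ x ∈ l, x ∈ X) ∧ l.getLast? = some e}

/-- Multiset of labels of a (finite) set of events. -/
noncomputable def labelMS (𝒞 : CS E L) (S : Set E) : Multiset L := by
  classical exact if h : S.Finite then h.toFinset.val.map 𝒞.label else 0

/-- Single-event forward transition `X —a→ X'`. -/
def FTrans (𝒞 : CS E L) (a : L) (X X' : Set E) : Prop :=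
  X ∈ 𝒞.C ∧ X' ∈ 𝒞.C ∧ X ⊆ X' ∧ ∃ e, X' \ X = {e} ∧ 𝒞.label e = a

/-- Single-event reverse transition `X ⇝a X'`. -/
def RTrans (𝒞 : CS E L) (a : L) (X X' : Set E) : Prop :=
  FTrans 𝒞 a X' X

/-- Step transition `X —A→ X'`: the added events are pairwise concurrent
in `X'` and carry the label multiset `A`. -/
def Step (𝒞 : CS E L) (A : Multiset L) (X X' : Set E) : Prop :=
  X ∈ 𝒞.C ∧ X' ∈ 𝒞.C ∧ X ⊆ X' ∧ ∃ F : Finset E, ↑F = X' \ X ∧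
    (∀ d ∈ F, ∀ e ∈ F, co 𝒞 X' d e) ∧ F.val.map 𝒞.label = A

/-- Reverse step transition `X ⇝A X'`. -/
def RStep (𝒞 : CS E L) (A : Multiset L) (X X' : Set E) : Prop :=
  Step 𝒞 A X' X

/-- Equidepth step: all added events have the same depth in `X'`. -/
def EqStep (𝒞 : CS E L) (A : Multiset L) (X X' : Set E) : Prop :=
  Step 𝒞 A X X' ∧ ∀ d ∈ X' \ X, ∀ e ∈ X' \ X, depth 𝒞 X' d = depth 𝒞 X' e

/-- Reverse equidepth step `X ⇝A= X'`. -/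
def REqStep (𝒞 : CS E L) (A : Multiset L) (X X' : Set E) : Prop :=
  EqStep 𝒞 A X' X

/-- Single-event forward transition with depth: the new event has label `a`
and depth `k` in `X'`. -/
def FTransD (𝒞 : CS E L) (a : L) (k : ℕ) (X X' : Set E) : Prop :=
  X ∈ 𝒞.C ∧ X' ∈ 𝒞.C ∧ X ⊆ X' ∧
    ∃ e, X' \ X = {e} ∧ 𝒞.label e = a ∧ depth 𝒞 X' e = k

/-- Single-event reverse transition with depth. -/
def RTransD (𝒞 : CS E L) (a : L) (k : ℕ) (X X' : Set E) : Prop :=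
  FTransD 𝒞 a k X' X

/-- A multiset of labels is homogeneous if all its elements are equal. -/
def Hom (A : Multiset L) : Prop := ∀ a ∈ A, ∀ b ∈ A, a = b

/-- `R` is a relation between configurations of `𝒞` and `𝒟`, containing `(∅, ∅)`. -/
def Dom (𝒞 : CS E₁ L) (𝒟 : CS E₂ L) (R : Set E₁ → Set E₂ → Prop) : Prop :=
  R ∅ ∅ ∧ ∀ X Y, R X Y → X ∈ 𝒞.C ∧ Y ∈ 𝒟.C

/-- Interleaving bisimulation. -/
def IsIB (𝒞 : CS E₁ L) (𝒟 : CS E₂ L) (R : Set E₁ → Set E₂ → Prop) : Prop :=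
  Dom 𝒞 𝒟 R ∧ ∀ X Y, R X Y →
    (∀ a X', FTrans 𝒞 a X X' → ∃ Y', FTrans 𝒟 a Y Y' ∧ R X' Y') ∧
    (∀ a Y', FTrans 𝒟 a Y Y' → ∃ X', FTrans 𝒞 a X X' ∧ R X' Y')

/-- Reverse bisimulation: an IB also matching reverse single-event transitions. -/
def IsRB (𝒞 : CS E₁ L) (𝒟 : CS E₂ L) (R : Set E₁ → Set E₂ → Prop) : Prop :=
  IsIB 𝒞 𝒟 R ∧ ∀ X Y, R X Y →
    (∀ a X', RTrans 𝒞 a X X' → ∃ Y', RTrans 𝒟 a Y Y' ∧ R X' Y') ∧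
    (∀ a Y', RTrans 𝒟 a Y Y' → ∃ X', RTrans 𝒞 a X X' ∧ R X' Y')

/-- Step bisimulation. -/
def IsSB (𝒞 : CS E₁ L) (𝒟 : CS E₂ L) (R : Set E₁ → Set E₂ → Prop) : Prop :=
  Dom 𝒞 𝒟 R ∧ ∀ X Y, R X Y →
    (∀ A X', Step 𝒞 A X X' → ∃ Y', Step 𝒟 A Y Y' ∧ R X' Y') ∧
    (∀ A Y', Step 𝒟 A Y Y' → ∃ X', Step 𝒞 A X X' ∧ R X' Y')

/-- Reverse step bisimulation: an SB also matching reverse steps. -/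
def IsRSB (𝒞 : CS E₁ L) (𝒟 : CS E₂ L) (R : Set E₁ → Set E₂ → Prop) : Prop :=
  IsSB 𝒞 𝒟 R ∧ ∀ X Y, R X Y →
    (∀ A X', RStep 𝒞 A X X' → ∃ Y', RStep 𝒟 A Y Y' ∧ R X' Y') ∧
    (∀ A Y', RStep 𝒟 A Y Y' → ∃ X', RStep 𝒞 A X X' ∧ R X' Y')

/-- Reverse homogeneous step bisimulation: matches forward single-event
transitions and reverse homogeneous steps. -/
def IsRHSB (𝒞 : CS E₁ L) (𝒟 : CS E₂ L) (R : Set E₁ → Set E₂ → Prop) : Prop :=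
  Dom 𝒞 𝒟 R ∧ ∀ X Y, R X Y →
    (∀ a X', FTrans 𝒞 a X X' → ∃ Y', FTrans 𝒟 a Y Y' ∧ R X' Y') ∧
    (∀ a Y', FTrans 𝒟 a Y Y' → ∃ X', FTrans 𝒞 a X X' ∧ R X' Y') ∧
    (∀ A X', Hom A → RStep 𝒞 A X X' → ∃ Y', RStep 𝒟 A Y Y' ∧ R X' Y') ∧
    (∀ A Y', Hom A → RStep 𝒟 A Y Y' → ∃ X', RStep 𝒞 A X X' ∧ R X' Y')

/-- Reverse homogeneous equidepth step bisimulation. -/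
def IsRHESB (𝒞 : CS E₁ L) (𝒟 : CS E₂ L) (R : Set E₁ → Set E₂ → Prop) : Prop :=
  Dom 𝒞 𝒟 R ∧ ∀ X Y, R X Y →
    (∀ a X', FTrans 𝒞 a X X' → ∃ Y', FTrans 𝒟 a Y Y' ∧ R X' Y') ∧
    (∀ a Y', FTrans 𝒟 a Y Y' → ∃ X', FTrans 𝒞 a X X' ∧ R X' Y') ∧
    (∀ A X', Hom A → REqStep 𝒞 A X X' → ∃ Y', REqStep 𝒟 A Y Y' ∧ R X' Y') ∧
    (∀ A Y', Hom A → REqStep 𝒟 A Y Y' → ∃ X', REqStep 𝒞 A X X' ∧ R X' Y')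

/-- Depth-respecting bisimulation. -/
def IsDB (𝒞 : CS E₁ L) (𝒟 : CS E₂ L) (R : Set E₁ → Set E₂ → Prop) : Prop :=
  Dom 𝒞 𝒟 R ∧ ∀ X Y, R X Y →
    (∀ a k X', FTransD 𝒞 a k X X' → ∃ Y', FTransD 𝒟 a k Y Y' ∧ R X' Y') ∧
    (∀ a k Y', FTransD 𝒟 a k Y Y' → ∃ X', FTransD 𝒞 a k X X' ∧ R X' Y')

/-- Reverse depth-respecting bisimulation. -/
def IsRDB (𝒞 : CS E₁ L) (𝒟 : CS E₂ L) (R : Set E₁ → Set E₂ → Prop) : Prop :=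
  IsDB 𝒞 𝒟 R ∧ ∀ X Y, R X Y →
    (∀ a k X', RTransD 𝒞 a k X X' → ∃ Y', RTransD 𝒟 a k Y Y' ∧ R X' Y') ∧
    (∀ a k Y', RTransD 𝒟 a k Y Y' → ∃ X', RTransD 𝒞 a k X X' ∧ R X' Y')

/-- The lifting of a configuration structure w.r.t. a configuration `M`. -/
def lift (𝒞 : CS E L) (M : Set E) : CS E L where
  C := {Z | ∃ X, X ∈ 𝒞.C ∧ M ⊆ X ∧ minE 𝒞 X = minE 𝒞 M ∧ Z = X \ M}
  finite := by
    rintro Z ⟨X, hX, -, -, rfl⟩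
    exact (𝒞.finite X hX).subset Set.diff_subset
  label := 𝒞.label

/-- Events of `X` of depth at most `n`. -/
def levelLe (𝒞 : CS E L) (X : Set E) (n : ℕ) : Set E :=
  {e | e ∈ X ∧ depth 𝒞 X e ≤ n}

/-- Events of `X` of depth exactly `n`. -/
def levelEq (𝒞 : CS E L) (X : Set E) (n : ℕ) : Set E :=
  {e | e ∈ X ∧ depth 𝒞 X e = n}

/-- No equidepth auto-concurrency: distinct concurrent events never share
both label and depth. -/
def NoEqAC (𝒞 : CS E L) : Prop :=
  ∀ X ∈ 𝒞.C, ∀ d ∈ X, ∀ e ∈ X, co 𝒞 X d e → 𝒞.label d = 𝒞.label e →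
    depth 𝒞 X d = depth 𝒞 X e → d = e

/-- `f` (a set of pairs) is a label- and order-preserving isomorphism
between configurations `X` and `Y`. -/
def IsIso (𝒞 : CS E₁ L) (𝒟 : CS E₂ L) (X : Set E₁) (Y : Set E₂)
    (f : Set (E₁ × E₂)) : Prop :=
  (∀ p ∈ f, p.1 ∈ X ∧ p.2 ∈ Y) ∧
  (∀ d ∈ X, ∃! e, (d, e) ∈ f) ∧
  (∀ e ∈ Y, ∃! d, (d, e) ∈ f) ∧
  (∀ p ∈ f, 𝒞.label p.1 = 𝒟.label p.2) ∧
  (∀ p ∈ f, ∀ q ∈ f, (lt 𝒞 X p.1 q.1 ↔ lt 𝒟 Y p.2 q.2))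

/-- Hereditary history-preserving bisimulation. -/
def IsHH (𝒞 : CS E₁ L) (𝒟 : CS E₂ L)
    (R : Set (Set E₁ × Set E₂ × Set (E₁ × E₂))) : Prop :=
  (∅, ∅, ∅) ∈ R ∧
  ∀ X Y f, (X, Y, f) ∈ R →
    X ∈ 𝒞.C ∧ Y ∈ 𝒟.C ∧ IsIso 𝒞 𝒟 X Y f ∧
    (∀ a X', FTrans 𝒞 a X X' → ∃ Y' f', FTrans 𝒟 a Y Y' ∧
      (X', Y', f') ∈ R ∧ {p ∈ f' | p.1 ∈ X} = f) ∧
    (∀ a Y', FTrans 𝒟 a Y Y' → ∃ X' f', FTrans 𝒞 a X X' ∧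
      (X', Y', f') ∈ R ∧ {p ∈ f' | p.1 ∈ X} = f) ∧
    (∀ a X', RTrans 𝒞 a X X' → ∃ Y' f', RTrans 𝒟 a Y Y' ∧
      (X', Y', f') ∈ R ∧ {p ∈ f | p.1 ∈ X'} = f')

end CS

open CS


section StmtFourAux

variable {E E₁ E₂ : Type u} {L : Type v}

lemma aux_labelMS_def (𝒞 : CS E L) {S : Set E} (hS : S.Finite) :
    labelMS 𝒞 S = hS.toFinset.val.map 𝒞.label := by
  simp only [labelMS, dif_pos hS]

lemma aux_labelMS_cons (𝒞 : CS E L) {S : Set E} (hS : S.Finite) {e : E} (he : e ∈ S) :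
    labelMS 𝒞 S = 𝒞.label e ::ₘ labelMS 𝒞 (S \ {e}) := by
  classical
  rw [aux_labelMS_def 𝒞 hS, aux_labelMS_def 𝒞 (hS.diff (t := {e}))]
  have h1 : (hS.diff (t := {e})).toFinset = hS.toFinset.erase e := by
    ext x; simp [Set.mem_diff, and_comm]
  rw [h1]
  have h2 : hS.toFinset.val = e ::ₘ (hS.toFinset.erase e).val := by
    rw [Finset.erase_val]
    exact (Multiset.cons_erase (by simpa using he)).symm
  rw [h2, Multiset.map_cons]

lemma aux_mem_labelMS (𝒞 : CS E L) {S : Set E} (hS : S.Finite) {b : L} :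
    b ∈ labelMS 𝒞 S ↔ ∃ x ∈ S, 𝒞.label x = b := by
  rw [aux_labelMS_def 𝒞 hS]; simp [Multiset.mem_map]

lemma aux_card_labelMS (𝒞 : CS E L) {S : Set E} (hS : S.Finite) :
    Multiset.card (labelMS 𝒞 S) = S.ncard := by
  rw [aux_labelMS_def 𝒞 hS, Multiset.card_map, Set.ncard_eq_toFinset_card _ hS]
  rfl

lemma aux_hom_singleton {a : L} : Hom ({a} : Multiset L) := by
  intro x hx y hy
  rw [Multiset.mem_singleton] at hx hy; rw [hx, hy]

lemma aux_rstep_singleton (𝒞 : CS E L) {X : Set E} {e : E} (hX : X ∈ 𝒞.C)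
    (hX' : X \ {e} ∈ 𝒞.C) (he : e ∈ X) :
    RStep 𝒞 {𝒞.label e} X (X \ {e}) := by
  refine ⟨hX', hX, Set.diff_subset, {e}, ?_, ?_, by simp⟩
  · rw [Set.diff_diff_right_self, Set.inter_eq_right.mpr (by simpa using he)]
    simp
  · intro d hd f hf
    rw [Finset.mem_singleton] at hd hf
    subst hd; subst hf
    exact ⟨fun h => h.2 rfl, fun h => h.2 rfl⟩

lemma aux_rstep_singleton_inv (𝒟 : CS E L) {Y Y' : Set E} {a : L}
    (h : RStep 𝒟 {a} Y Y') :
    ∃ f ∈ Y, Y' = Y \ {f} ∧ 𝒟.label f = a ∧ Y' ∈ 𝒟.C ∧ Y' ⊆ Y := by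
  obtain ⟨hY', hY, hsub, F, hF, hco, hmap⟩ := h
  have hcard : F.card = 1 := by
    have := congrArg Multiset.card hmap; simpa using this
  obtain ⟨f, rfl⟩ := Finset.card_eq_one.mp hcard
  have hlab : 𝒟.label f = a := by simpa using hmap
  have hYY' : Y \ Y' = {f} := by rw [← hF]; simp
  have hfY : f ∈ Y \ Y' := by rw [hYY']; exact rfl
  refine ⟨f, hfY.1, ?_, hlab, hY', hsub⟩
  ext x
  constructor
  · intro hx
    refine ⟨hsub hx, fun hxe => ?_⟩
    rw [Set.mem_singleton_iff] at hxe; subst hxe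
    exact hfY.2 hx
  · rintro ⟨hxY, hxf⟩
    by_contra hxY'
    have : x ∈ Y \ Y' := ⟨hxY, hxY'⟩
    rw [hYY'] at this
    exact hxf this

lemma aux_IsRHSB_symm {𝒞 : CS E₁ L} {𝒟 : CS E₂ L} {R : Set E₁ → Set E₂ → Prop}
    (hR : IsRHSB 𝒞 𝒟 R) : IsRHSB 𝒟 𝒞 (fun Y X => R X Y) := by
  obtain ⟨⟨h0, hdom⟩, hcl⟩ := hR
  refine ⟨⟨h0, fun Y X hXY => ⟨(hdom X Y hXY).2, (hdom X Y hXY).1⟩⟩, ?_⟩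
  intro Y X hXY
  obtain ⟨c1, c2, c3, c4⟩ := hcl X Y hXY
  exact ⟨c2, c1, c4, c3⟩

lemma aux_empty_of_rel {𝒞 : CS E₁ L} {𝒟 : CS E₂ L} {R : Set E₁ → Set E₂ → Prop}
    (h𝒟 : IsStable 𝒟) (hR : IsRHSB 𝒞 𝒟 R) {Y : Set E₂} (hXY : R ∅ Y) : Y = ∅ := by
  by_contra hne
  have hY := (hR.1.2 ∅ Y hXY).2
  obtain ⟨f, hfY, hY'⟩ := h𝒟.2.1 Y hY hne
  have hstep := aux_rstep_singleton 𝒟 hY hY' hfY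
  obtain ⟨X', hX'step, -⟩ := (hR.2 ∅ Y hXY).2.2.2 _ _ aux_hom_singleton hstep
  obtain ⟨hX'C, -, hX'sub, F, hF, -, hmap⟩ := hX'step
  have hF0 : (F : Set E₁) = ∅ := by
    rw [hF, Set.empty_diff]
  have : F = ∅ := by exact_mod_cast Finset.coe_injective (by simpa using hF0)
  subst this
  simp at hmap

lemma aux_labelMS_of_rel {𝒞 : CS E₁ L} {𝒟 : CS E₂ L} {R : Set E₁ → Set E₂ → Prop}
    (h𝒞 : IsStable 𝒞) (h𝒟 : IsStable 𝒟) (hR : IsRHSB 𝒞 𝒟 R) :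
    ∀ X Y, R X Y → labelMS 𝒞 X = labelMS 𝒟 Y := by
  have key : ∀ n (X : Set E₁) (Y : Set E₂), R X Y → X.ncard ≤ n →
      labelMS 𝒞 X = labelMS 𝒟 Y := by
    intro n
    induction n with
    | zero =>
      intro X Y hXY hc
      obtain ⟨hX, hY⟩ := hR.1.2 X Y hXY
      have hXfin := 𝒞.finite X hX
      have hX0 : X = ∅ := by
        have := Set.ncard_eq_zero hXfin
        rw [← this]; omega
      subst hX0
      have hY0 : Y = ∅ := aux_empty_of_rel h𝒟 hR hXY
      subst hY0
      rw [aux_labelMS_def 𝒞 Set.finite_empty, aux_labelMS_def 𝒟 Set.finite_empty]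
      simp
    | succ n ih =>
      intro X Y hXY hc
      obtain ⟨hX, hY⟩ := hR.1.2 X Y hXY
      have hXfin := 𝒞.finite X hX
      by_cases hXe : X = ∅
      · subst hXe
        have hY0 : Y = ∅ := aux_empty_of_rel h𝒟 hR hXY
        subst hY0
        rw [aux_labelMS_def 𝒞 Set.finite_empty, aux_labelMS_def 𝒟 Set.finite_empty]
        simp
      · obtain ⟨e, heX, hX'⟩ := h𝒞.2.1 X hX hXe
        have hstep := aux_rstep_singleton 𝒞 hX hX' heX
        obtain ⟨Y', hYstep, hrel⟩ := (hR.2 X Y hXY).2.2.1 _ _ aux_hom_singleton hstep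
        obtain ⟨f, hfY, rfl, hlab, -, -⟩ := aux_rstep_singleton_inv 𝒟 hYstep
        have hih : labelMS 𝒞 (X \ {e}) = labelMS 𝒟 (Y \ {f}) := by
          apply ih _ _ hrel
          have hlt : (X \ {e}).ncard < X.ncard :=
            Set.ncard_diff_singleton_lt_of_mem heX hXfin
          omega
        rw [aux_labelMS_cons 𝒞 hXfin heX, aux_labelMS_cons 𝒟 (𝒟.finite Y hY) hfY,
          hih, hlab]
  intro X Y hXY
  exact key X.ncard X Y hXY le_rfl

lemma aux_minE_singleton (𝒞 : CS E L) (h : IsStable 𝒞) {X : Set E}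
    (hX : X ∈ 𝒞.C) {e : E} (he : e ∈ minE 𝒞 X) : {e} ∈ 𝒞.C := by
  obtain ⟨heX, hmin⟩ := he
  have key : ∀ n (Z : Set E), Z ∈ 𝒞.C → Z ⊆ X → e ∈ Z → Z.ncard ≤ n → {e} ∈ 𝒞.C := by
    intro n
    induction n with
    | zero =>
      intro Z hZ hZX heZ hc
      have := Set.ncard_eq_zero (𝒞.finite Z hZ)
      have hZ0 : Z = ∅ := by rw [← this]; omega
      subst hZ0; exact absurd heZ (Set.notMem_empty e)
    | succ n ih =>
      intro Z hZ hZX heZ hc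
      by_cases hZe : Z = {e}
      · exact hZe ▸ hZ
      · have hd : ∃ d ∈ Z, d ≠ e := by
          by_contra h'
          push_neg at h'
          apply hZe
          apply Set.eq_singleton_iff_unique_mem.mpr ⟨heZ, h'⟩
        obtain ⟨d, hdZ, hde⟩ := hd
        have hnle : ¬ le 𝒞 X d e := fun h' => hmin d (hZX hdZ) ⟨h', hde⟩
        simp only [le, not_forall] at hnle
        obtain ⟨W, hW, hWX, heW, hdW⟩ := hnle
        have hZW : Z ∩ W ∈ 𝒞.C :=
          h.2.2.2 Z hZ W hW X hX (Set.union_subset hZX hWX)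
        apply ih (Z ∩ W) hZW (Set.inter_subset_left.trans hZX) ⟨heZ, heW⟩
        have hss : Z ∩ W ⊂ Z := by
          refine ⟨Set.inter_subset_left, fun hsub => hdW (hsub hdZ).2⟩
        have := Set.ncard_lt_ncard hss (𝒞.finite Z hZ)
        omega
  exact key X.ncard X hX subset_rfl heX le_rfl

lemma aux_subset_minE_mem (𝒞 : CS E L) (h : IsStable 𝒞) {X : Set E} (hX : X ∈ 𝒞.C) :
    ∀ S : Set E, S ⊆ minE 𝒞 X → S ∈ 𝒞.C := by
  have hXfin := 𝒞.finite X hX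
  have hkey : ∀ S : Set E, S.Finite → S ⊆ minE 𝒞 X → S ∈ 𝒞.C := by
    intro S hSfin
    refine Set.Finite.induction_on (motive := fun T _ => T ⊆ minE 𝒞 X → T ∈ 𝒞.C) S hSfin
      (fun _ => h.1) ?_
    intro a s ha hsfin ih hsub
    · have h1 : ({a} : Set E) ∈ 𝒞.C :=
        aux_minE_singleton 𝒞 h hX (hsub (Set.mem_insert a s))
      have h2 : s ∈ 𝒞.C := ih (fun x hx => hsub (Set.mem_insert_of_mem a hx))
      have h3 : {a} ∪ s ⊆ X := by
        rw [Set.singleton_union]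
        intro x hx
        exact (hsub hx).1
      have := h.2.2.1 {a} h1 s h2 X hX h3
      rwa [Set.singleton_union] at this
  intro S hS
  exact hkey S (hXfin.subset (fun x hx => (hS hx).1)) hS

lemma aux_exists_removable (𝒞 : CS E L) (h : IsStable 𝒞) :
    ∀ n (Z M : Set E), Z ∈ 𝒞.C → M ∈ 𝒞.C → M ⊆ Z → ¬ Z ⊆ M → Z.ncard ≤ n →
      ∃ e ∈ Z, e ∉ M ∧ Z \ {e} ∈ 𝒞.C := by
  intro n
  induction n with
  | zero =>
    intro Z M hZ hM hMZ hne hc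
    exfalso
    obtain ⟨x, hxZ, -⟩ := Set.not_subset.mp hne
    have := Set.ncard_eq_zero (𝒞.finite Z hZ)
    have hZ0 : Z = ∅ := by rw [← this]; omega
    subst hZ0; exact Set.notMem_empty x hxZ
  | succ n ih =>
    intro Z M hZ hM hMZ hne hc
    have hZne : Z ≠ ∅ := by
      rintro rfl; exact hne (Set.empty_subset M)
    obtain ⟨e₀, he₀, hZ'⟩ := h.2.1 Z hZ hZne
    by_cases he₀M : e₀ ∈ M
    · have hM' : M \ {e₀} ∈ 𝒞.C := by
        have hub : M ∪ (Z \ {e₀}) ⊆ Z := Set.union_subset hMZ Set.diff_subset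
        have := h.2.2.2 M hM (Z \ {e₀}) hZ' Z hZ hub
        have heq : M ∩ (Z \ {e₀}) = M \ {e₀} := by
          ext x
          simp only [Set.mem_inter_iff, Set.mem_diff, Set.mem_singleton_iff]
          exact ⟨fun ⟨h1, _, h3⟩ => ⟨h1, h3⟩, fun ⟨h1, h2⟩ => ⟨h1, hMZ h1, h2⟩⟩
        rwa [heq] at this
      have hMZ' : M \ {e₀} ⊆ Z \ {e₀} := Set.diff_subset_diff_left hMZ
      have hne' : ¬ (Z \ {e₀}) ⊆ (M \ {e₀}) := by
        intro hcon
        apply hne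
        intro x hxZ
        by_cases hx : x = e₀
        · exact hx ▸ he₀M
        · exact (hcon ⟨hxZ, hx⟩).1
      have hcard : (Z \ {e₀}).ncard ≤ n := by
        have := Set.ncard_diff_singleton_lt_of_mem he₀ (𝒞.finite Z hZ)
        omega
      obtain ⟨e, heZ', heM', hrem⟩ := ih (Z \ {e₀}) (M \ {e₀}) hZ' hM' hMZ' hne' hcard
      have heM : e ∉ M := by
        intro heM
        exact heM' ⟨heM, heZ'.2⟩
      refine ⟨e, heZ'.1, heM, ?_⟩
      have hub : ((Z \ {e₀}) \ {e}) ∪ M ⊆ Z :=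
        Set.union_subset (Set.diff_subset.trans Set.diff_subset) hMZ
      have := h.2.2.1 _ hrem M hM Z hZ hub
      have heq : ((Z \ {e₀}) \ {e}) ∪ M = Z \ {e} := by
        ext x
        simp only [Set.mem_union, Set.mem_diff, Set.mem_singleton_iff]
        constructor
        · rintro (⟨⟨h1, -⟩, h3⟩ | hxM)
          · exact ⟨h1, h3⟩
          · exact ⟨hMZ hxM, fun hx => heM (hx ▸ hxM)⟩
        · rintro ⟨hxZ, hxe⟩
          by_cases hx : x = e₀
          · exact Or.inr (hx ▸ he₀M)
          · exact Or.inl ⟨⟨hxZ, hx⟩, hxe⟩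
      rwa [heq] at this
    · exact ⟨e₀, he₀, he₀M, hZ'⟩

lemma aux_descend {𝒞 : CS E₁ L} {𝒟 : CS E₂ L} {R : Set E₁ → Set E₂ → Prop}
    (h𝒞 : IsStable 𝒞) (hR : IsRHSB 𝒞 𝒟 R) {M : Set E₁} (hM : M ∈ 𝒞.C) :
    ∀ n (Z : Set E₁) (W : Set E₂), R Z W → M ⊆ Z → (Z \ M).ncard ≤ n →
      ∃ W', R M W' ∧ W' ⊆ W := by
  intro n
  induction n with
  | zero =>
    intro Z W hZW hMZ hc
    have hZ := (hR.1.2 Z W hZW).1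
    have hfin : (Z \ M).Finite := (𝒞.finite Z hZ).diff (t := M)
    have h0 : Z \ M = ∅ := by
      have := Set.ncard_eq_zero hfin
      rw [← this]; omega
    have : Z = M := Set.Subset.antisymm (by
      intro x hx
      by_contra hxM
      have : x ∈ Z \ M := ⟨hx, hxM⟩
      rw [h0] at this
      exact this) hMZ
    exact ⟨W, this ▸ hZW, subset_rfl⟩
  | succ n ih =>
    intro Z W hZW hMZ hc
    by_cases hZM : Z ⊆ M
    · exact ⟨W, (Set.Subset.antisymm hZM hMZ) ▸ hZW, subset_rfl⟩
    · have hZ := (hR.1.2 Z W hZW).1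
      obtain ⟨e, heZ, heM, hrem⟩ :=
        aux_exists_removable 𝒞 h𝒞 Z.ncard Z M hZ hM hMZ hZM le_rfl
      have hstep := aux_rstep_singleton 𝒞 hZ hrem heZ
      obtain ⟨W₁, hWstep, hrel⟩ := (hR.2 Z W hZW).2.2.1 _ _ aux_hom_singleton hstep
      obtain ⟨f, hfW, rfl, -, -, hW₁sub⟩ := aux_rstep_singleton_inv 𝒟 hWstep
      have hMZ' : M ⊆ Z \ {e} := by
        intro x hx
        exact ⟨hMZ hx, fun hxe => heM (hxe ▸ hx)⟩
      have hcard : ((Z \ {e}) \ M).ncard ≤ n := by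
        have heq : (Z \ {e}) \ M = (Z \ M) \ {e} := by
          ext x; simp only [Set.mem_diff, Set.mem_singleton_iff]; tauto
        have hlt : ((Z \ M) \ {e}).ncard < (Z \ M).ncard :=
          Set.ncard_diff_singleton_lt_of_mem ⟨heZ, heM⟩ ((𝒞.finite Z hZ).diff (t := M))
        rw [heq]; omega
      obtain ⟨W', hW', hsub⟩ := ih (Z \ {e}) (W \ {f}) hrel hMZ' hcard
      exact ⟨W', hW', hsub.trans hW₁sub⟩

lemma aux_remove_label {𝒞 : CS E₁ L} {𝒟 : CS E₂ L} {R : Set E₁ → Set E₂ → Prop}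
    (h𝒞 : IsStable 𝒞) (h𝒟 : IsStable 𝒟) (hR : IsRHSB 𝒞 𝒟 R) {U : Set E₁} {V : Set E₂}
    (hUV : R U V) (hsub : ∀ S : Set E₁, S ⊆ U → S ∈ 𝒞.C) (b : L) :
    (V \ {v | 𝒟.label v = b} ∈ 𝒟.C) ∧
      (∀ d ∈ V, ∀ f ∈ V, 𝒟.label d = b → 𝒟.label f = b → co 𝒟 V d f) := by
  classical
  obtain ⟨hU, hV⟩ := hR.1.2 U V hUV
  have hUfin := 𝒞.finite U hU
  set T : Set E₁ := {u ∈ U | 𝒞.label u = b} with hT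
  have hTfin : T.Finite := hUfin.subset (fun x hx => hx.1)
  set F : Finset E₁ := hTfin.toFinset with hF
  set U' : Set E₁ := U \ {u | 𝒞.label u = b} with hU'
  have hU'C : U' ∈ 𝒞.C := hsub U' Set.diff_subset
  set A : Multiset L := F.val.map 𝒞.label with hA
  have hAb : ∀ a ∈ A, a = b := by
    intro a ha
    rw [hA, Multiset.mem_map] at ha
    obtain ⟨x, hx, rfl⟩ := ha
    have : x ∈ T := hTfin.mem_toFinset.mp (Finset.mem_val.mp hx)
    exact this.2
  have hHom : Hom A := fun x hx y hy => (hAb x hx).trans (hAb y hy).symm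
  have hcoU : ∀ d ∈ U, ∀ e ∈ U, co 𝒞 U d e := by
    intro d hd e he
    constructor
    · rintro ⟨hle, hne⟩
      have h1 : ({e} : Set E₁) ∈ 𝒞.C := hsub {e} (Set.singleton_subset_iff.mpr he)
      have := hle {e} h1 (Set.singleton_subset_iff.mpr he) rfl
      exact hne this
    · rintro ⟨hle, hne⟩
      have h1 : ({d} : Set E₁) ∈ 𝒞.C := hsub {d} (Set.singleton_subset_iff.mpr hd)
      have := hle {d} h1 (Set.singleton_subset_iff.mpr hd) rfl
      exact hne this
  have hstep : RStep 𝒞 A U U' := by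
    refine ⟨hU'C, hU, Set.diff_subset, F, ?_, ?_, rfl⟩
    · ext x
      simp only [hF, Set.Finite.coe_toFinset, hT, hU', Set.mem_diff,
        Set.mem_setOf_eq, Set.mem_sep_iff]
      tauto
    · intro d hd e he
      rw [hF, Set.Finite.mem_toFinset] at hd he
      exact hcoU d hd.1 e he.1
  obtain ⟨V₁, hVstep, hrel⟩ := (hR.2 U V hUV).2.2.1 A U' hHom hstep
  obtain ⟨hV₁C, -, hV₁sub, G, hG, hcoG, hmapG⟩ := hVstep
  have hGb : ∀ g ∈ G, 𝒟.label g = b := by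
    intro g hg
    have : 𝒟.label g ∈ A := by
      rw [← hmapG]
      exact Multiset.mem_map_of_mem _ hg
    exact hAb _ this
  have hV₁nb : ∀ v ∈ V₁, 𝒟.label v ≠ b := by
    intro v hv hvb
    have hls : labelMS 𝒞 U' = labelMS 𝒟 V₁ := aux_labelMS_of_rel h𝒞 h𝒟 hR U' V₁ hrel
    have hbV₁ : b ∈ labelMS 𝒟 V₁ := (aux_mem_labelMS 𝒟 (𝒟.finite V₁ hV₁C)).mpr ⟨v, hv, hvb⟩
    rw [← hls, aux_mem_labelMS 𝒞 (𝒞.finite U' hU'C)] at hbV₁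
    obtain ⟨x, hx, hxb⟩ := hbV₁
    exact hx.2 hxb
  have hV₁eq : V₁ = V \ {v | 𝒟.label v = b} := by
    ext x
    simp only [Set.mem_diff, Set.mem_setOf_eq]
    constructor
    · intro hx
      exact ⟨hV₁sub hx, hV₁nb x hx⟩
    · rintro ⟨hxV, hxb⟩
      by_contra hxV₁
      have : x ∈ (G : Set E₂) := by rw [hG]; exact ⟨hxV, hxV₁⟩
      exact hxb (hGb x (by exact_mod_cast this))
  constructor
  · rw [← hV₁eq]; exact hV₁C
  · intro d hdV f hfV hdb hfb
    have hdG : d ∈ G := by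
      have : d ∈ V \ V₁ := by
        rw [hV₁eq]
        exact ⟨hdV, fun hcon => hcon.2 hdb⟩
      rw [← hG] at this
      exact_mod_cast this
    have hfG : f ∈ G := by
      have : f ∈ V \ V₁ := by
        rw [hV₁eq]
        exact ⟨hfV, fun hcon => hcon.2 hfb⟩
      rw [← hG] at this
      exact_mod_cast this
    exact hcoG d hdG f hfG

lemma aux_subset_minE_of {𝒞 : CS E₁ L} {𝒟 : CS E₂ L} {R : Set E₁ → Set E₂ → Prop}
    (h𝒞 : IsStable 𝒞) (h𝒟 : IsStable 𝒟) (hR : IsRHSB 𝒞 𝒟 R) {U : Set E₁} {V Y : Set E₂}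
    (hUV : R U V) (hsub : ∀ S : Set E₁, S ⊆ U → S ∈ 𝒞.C)
    (hVY : V ⊆ Y) (hY : Y ∈ 𝒟.C) : V ⊆ minE 𝒟 Y := by
  intro f hfV
  refine ⟨hVY hfV, fun d hdY hlt => ?_⟩
  obtain ⟨hle, hdf⟩ := hlt
  have hV := (hR.1.2 U V hUV).2
  by_cases hdV : d ∈ V
  · by_cases hlab : 𝒟.label d = 𝒟.label f
    · have hco := (aux_remove_label h𝒞 h𝒟 hR hUV hsub (𝒟.label f)).2 d hdV f hfV hlab rfl
      apply hco.1
      exact ⟨fun W hW hWV hfW => hle W hW (hWV.trans hVY) hfW, hdf⟩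
    · have hC := (aux_remove_label h𝒞 h𝒟 hR hUV hsub (𝒟.label d)).1
      have hfmem : f ∈ V \ {v | 𝒟.label v = 𝒟.label d} :=
        ⟨hfV, fun h => hlab (Set.mem_setOf_eq ▸ h).symm⟩
      have := hle _ hC (Set.diff_subset.trans hVY) hfmem
      exact this.2 rfl
  · exact hdV (hle V hV hVY hfV)

end StmtFourAux

/-- a reverse homogeneous step bisimulation relates the sets of
minimal events of related configurations. -/
theorem stmt4 {E₁ E₂ : Type u} {L : Type v} (𝒞 : CS E₁ L) (𝒟 : CS E₂ L)
    (h𝒞 : IsStable 𝒞) (h𝒟 : IsStable 𝒟)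
    (R : Set E₁ → Set E₂ → Prop) (hR : IsRHSB 𝒞 𝒟 R)
    (X : Set E₁) (Y : Set E₂) (hXY : R X Y) :
    R (minE 𝒞 X) (minE 𝒟 Y) := by
  classical
  obtain ⟨hX, hY⟩ := hR.1.2 X Y hXY
  have hXfin := 𝒞.finite X hX
  have hYfin := 𝒟.finite Y hY
  have hMX : minE 𝒞 X ⊆ X := fun x hx => hx.1
  have hNY : minE 𝒟 Y ⊆ Y := fun x hx => hx.1
  have hsubM : ∀ S : Set E₁, S ⊆ minE 𝒞 X → S ∈ 𝒞.C := aux_subset_minE_mem 𝒞 h𝒞 hX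
  have hsubN : ∀ S : Set E₂, S ⊆ minE 𝒟 Y → S ∈ 𝒟.C := aux_subset_minE_mem 𝒟 h𝒟 hY
  have hMC : minE 𝒞 X ∈ 𝒞.C := hsubM _ subset_rfl
  have hNC : minE 𝒟 Y ∈ 𝒟.C := hsubN _ subset_rfl
  obtain ⟨Y₁, hRY₁, hY₁Y⟩ := aux_descend h𝒞 hR hMC X.ncard X Y hXY hMX
    (by
      have := Set.ncard_le_ncard (Set.diff_subset (s := X) (t := minE 𝒞 X)) hXfin
      omega)
  have hY₁N : Y₁ ⊆ minE 𝒟 Y := aux_subset_minE_of h𝒞 h𝒟 hR hRY₁ hsubM hY₁Y hY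
  have hR' := aux_IsRHSB_symm hR
  obtain ⟨X₁, hRX₁, hX₁X⟩ := aux_descend h𝒟 hR' hNC Y.ncard Y X hXY hNY
    (by
      have := Set.ncard_le_ncard (Set.diff_subset (s := Y) (t := minE 𝒟 Y)) hYfin
      omega)
  have hX₁M : X₁ ⊆ minE 𝒞 X := aux_subset_minE_of h𝒟 h𝒞 hR' hRX₁ hsubN hX₁X hX
  have hMfin : (minE 𝒞 X).Finite := hXfin.subset hMX
  have hNfin : (minE 𝒟 Y).Finite := hYfin.subset hNY
  have hY₁fin : Y₁.Finite := hNfin.subset hY₁N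
  have hX₁fin : X₁.Finite := hMfin.subset hX₁M
  have c1 : (minE 𝒞 X).ncard = Y₁.ncard := by
    have := aux_labelMS_of_rel h𝒞 h𝒟 hR _ _ hRY₁
    rw [← aux_card_labelMS 𝒞 hMfin, ← aux_card_labelMS 𝒟 hY₁fin, this]
  have c2 : (minE 𝒟 Y).ncard = X₁.ncard := by
    have := aux_labelMS_of_rel h𝒟 h𝒞 hR' _ _ hRX₁
    rw [← aux_card_labelMS 𝒟 hNfin, ← aux_card_labelMS 𝒞 hX₁fin, this]
  have hle1 : (minE 𝒟 Y).ncard ≤ Y₁.ncard := by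
    have h3 : X₁.ncard ≤ (minE 𝒞 X).ncard := Set.ncard_le_ncard hX₁M hMfin
    omega
  have hY₁eq : Y₁ = minE 𝒟 Y := Set.eq_of_subset_of_ncard_le hY₁N hle1 hNfin
  rw [← hY₁eq]
  exact hRY₁
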